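/- The Štefan permutation of period 2n+1 is convergent, and its over-rotation pair is (n, 2n+1). -/

import Mathlib

/-- The number of points of a combinatorial cycle `σ` at which the displacement changes
sign; the over-rotation pair of `σ` is `(orc σ / 2, N)`. -/
def orc {N : ℕ} (σ : Equiv.Perm (Fin N)) : ℕ :=
  (Finset.univ.filter fun i : Fin N =>
    (((σ i : ℕ) : ℤ) - ((i : ℕ) : ℤ)) * (((σ (σ i) : ℕ) : ℤ) - ((σ i : ℕ) : ℤ)) < 0).card

/-- `σ` is convergent if there is a threshold `m < N` with `σ i > i` below it and
`σ i < i` at and above it. -/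
def Convergent {N : ℕ} (σ : Equiv.Perm (Fin N)) : Prop :=
  ∃ m : ℕ, m < N ∧ ∀ i : Fin N,
    ((i : ℕ) < m → (i : ℕ) < (σ i : ℕ)) ∧ (m ≤ (i : ℕ) → (σ i : ℕ) < (i : ℕ))

/-- The Štefan permutation of period `2n+1` is convergent, and its over-rotation pair is
`(n, 2n+1)` (i.e. the sign-change count `orc σ` equals `2n`). -/
theorem stmt13 (n : ℕ) (hn : 1 ≤ n) (σ : Equiv.Perm (Fin (2 * n + 1)))
    (hσ : ∀ j : Fin (2 * n + 1), (σ j : ℕ) =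
      if (j : ℕ) = 0 then n
      else if (j : ℕ) ≤ n then 2 * n + 1 - (j : ℕ)
      else 2 * n - (j : ℕ)) :
    Convergent σ ∧ orc σ = 2 * n := by
  constructor
  · refine ⟨n + 1, by omega, fun i => ⟨?_, ?_⟩⟩
    · intro hi
      have h1 := hσ i
      by_cases h0 : (i : ℕ) = 0
      · rw [if_pos h0] at h1; omega
      · rw [if_neg h0, if_pos (by omega)] at h1; omega
    · intro hi
      have h1 := hσ i
      rw [if_neg (by omega), if_neg (by omega)] at h1
      omega
  · have key : (Finset.univ.filter fun i : Fin (2 * n + 1) =>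
        (((σ i : ℕ) : ℤ) - ((i : ℕ) : ℤ)) * (((σ (σ i) : ℕ) : ℤ) - ((σ i : ℕ) : ℤ)) < 0)
        = Finset.univ.filter fun i : Fin (2 * n + 1) => (i : ℕ) ≠ 0 := by
      ext i
      simp only [Finset.mem_filter, Finset.mem_univ, true_and]
      have h1 := hσ i
      have h2 := hσ (σ i)
      have hi := i.2
      by_cases h0 : (i : ℕ) = 0
      · refine iff_of_false ?_ (by simp [h0])
        rw [if_pos h0] at h1
        rw [if_neg (by omega), if_pos (by omega)] at h2
        have hp : (0:ℤ) < ((σ i : ℕ) : ℤ) - ((i : ℕ) : ℤ) := by omega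
        have hq : (0:ℤ) < ((σ (σ i) : ℕ) : ℤ) - ((σ i : ℕ) : ℤ) := by omega
        intro h
        nlinarith
      · refine iff_of_true ?_ h0
        by_cases hle : (i : ℕ) ≤ n
        · rw [if_neg h0, if_pos hle] at h1
          rw [if_neg (by omega), if_neg (by omega)] at h2
          have hp : (0:ℤ) < ((σ i : ℕ) : ℤ) - ((i : ℕ) : ℤ) := by omega
          have hq : ((σ (σ i) : ℕ) : ℤ) - ((σ i : ℕ) : ℤ) < 0 := by omega
          exact mul_neg_of_pos_of_neg hp hq
        · rw [if_neg h0, if_neg hle] at h1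
          by_cases hb0 : (σ i : ℕ) = 0
          · rw [if_pos hb0] at h2
            have hp : ((σ i : ℕ) : ℤ) - ((i : ℕ) : ℤ) < 0 := by omega
            have hq : (0:ℤ) < ((σ (σ i) : ℕ) : ℤ) - ((σ i : ℕ) : ℤ) := by omega
            exact mul_neg_of_neg_of_pos hp hq
          · rw [if_neg hb0, if_pos (by omega)] at h2
            have hp : ((σ i : ℕ) : ℤ) - ((i : ℕ) : ℤ) < 0 := by omega
            have hq : (0:ℤ) < ((σ (σ i) : ℕ) : ℤ) - ((σ i : ℕ) : ℤ) := by omega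
            exact mul_neg_of_neg_of_pos hp hq
    have herase : (Finset.univ.filter fun i : Fin (2 * n + 1) => (i : ℕ) ≠ 0)
        = Finset.univ.erase (0 : Fin (2 * n + 1)) := by
      ext i
      simp only [Finset.mem_filter, Finset.mem_univ, true_and, Finset.mem_erase, and_true, ne_eq, Fin.ext_iff, Fin.val_zero]
    rw [orc, key, herase, Finset.card_erase_of_mem (Finset.mem_univ _),
      Finset.card_univ, Fintype.card_fin]
    omega
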